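/- If A and B have full column rank, then (I − (BᵀB/‖B‖_F²) ⊗ (AᵀA/‖A‖_F²))^k converges to the zero matrix as k → ∞. -/

import Mathlib

open Matrix Kronecker

noncomputable def frobSq {m n : ℕ} (A : Matrix (Fin m) (Fin n) ℝ) : ℝ :=
  ∑ i, ∑ j, (A i j) ^ 2

lemma frobSq_eq_trace {m n : ℕ} (A : Matrix (Fin m) (Fin n) ℝ) :
    (Aᵀ * A).trace = frobSq A := by
  simp only [Matrix.trace, Matrix.diag, Matrix.mul_apply, frobSq, Matrix.transpose_apply, sq]
  exact Finset.sum_comm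

lemma frobSq_pos {m n : ℕ} {A : Matrix (Fin m) (Fin n) ℝ} (h : A ≠ 0) : 0 < frobSq A := by
  obtain ⟨i, hi⟩ := Function.ne_iff.mp h
  obtain ⟨j, hj⟩ := Function.ne_iff.mp hi
  refine Finset.sum_pos' (fun i _ => Finset.sum_nonneg fun j _ => sq_nonneg _) ?_
  exact ⟨i, Finset.mem_univ _, Finset.sum_pos' (fun j _ => sq_nonneg _)
    ⟨j, Finset.mem_univ _, (sq_nonneg _).lt_of_ne (Ne.symm (pow_ne_zero 2 hj))⟩⟩

lemma isUnit_of_rank_eq {n : ℕ} (M : Matrix (Fin n) (Fin n) ℝ) (h : M.rank = n) : IsUnit M := by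
  have hr : LinearMap.range M.mulVecLin = ⊤ := by
    apply Submodule.eq_top_of_finrank_eq
    rw [Module.finrank_fin_fun]
    exact h
  have hsurj : Function.Surjective M.mulVecLin := LinearMap.range_eq_top.mp hr
  have hinj : Function.Injective M.mulVec := by
    have h2 := (LinearMap.injective_iff_surjective).mpr hsurj
    intro x y hxy
    exact h2 (by simpa [Matrix.mulVecLin_apply] using hxy)
  exact Matrix.mulVec_injective_iff_isUnit.mp hinj

lemma tendsto_pow_hermitian {ι : Type*} [Fintype ι] [DecidableEq ι]
    (P : Matrix ι ι ℝ) (hP : P.IsHermitian)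
    (h : ∀ i, |1 - hP.eigenvalues i| < 1) :
    Filter.Tendsto (fun k : ℕ => (1 - P) ^ k) Filter.atTop (nhds 0) := by
  set U : Matrix ι ι ℝ := (hP.eigenvectorUnitary : Matrix ι ι ℝ) with hU
  set d : ι → ℝ := hP.eigenvalues with hd
  have hU1 : U * star U = 1 := Matrix.mem_unitaryGroup_iff.mp hP.eigenvectorUnitary.2
  have hU2 : star U * U = 1 := Matrix.mem_unitaryGroup_iff'.mp hP.eigenvectorUnitary.2
  have hdiag : P = U * Matrix.diagonal d * star U := by
    have := hP.spectral_theorem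
    simpa [RCLike.ofReal_real_eq_id] using this
  have hone : 1 - P = U * Matrix.diagonal (fun i => 1 - d i) * star U := by
    have h1 : (1 : Matrix ι ι ℝ) = U * Matrix.diagonal (fun _ : ι => (1:ℝ)) * star U := by
      simp [Matrix.diagonal_one, hU1]
    rw [hdiag]
    nth_rewrite 1 [h1]
    rw [← Matrix.sub_mul, ← Matrix.mul_sub, Matrix.diagonal_sub]
  have key : ∀ k : ℕ, (1 - P) ^ k = U * Matrix.diagonal (fun i => (1 - d i) ^ k) * star U := by
    intro k
    induction k with
    | zero => simp [hU1]
    | succ k ih =>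
      rw [pow_succ, ih, hone]
      calc U * Matrix.diagonal (fun i => (1 - d i) ^ k) * star U *
            (U * Matrix.diagonal (fun i => 1 - d i) * star U)
          = U * Matrix.diagonal (fun i => (1 - d i) ^ k) * (star U * U) *
            Matrix.diagonal (fun i => 1 - d i) * star U := by
            simp only [Matrix.mul_assoc]
        _ = U * (Matrix.diagonal (fun i => (1 - d i) ^ k) *
            Matrix.diagonal (fun i => 1 - d i)) * star U := by
            rw [hU2]; simp only [Matrix.mul_one, Matrix.mul_assoc]
        _ = U * Matrix.diagonal (fun i => (1 - d i) ^ (k + 1)) * star U := by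
            rw [Matrix.diagonal_mul_diagonal]
            have hf : (fun i => (1 - d i) ^ k * (1 - d i)) = fun i => (1 - d i) ^ (k + 1) := by
              funext i; rw [pow_succ]
            rw [hf]
  refine tendsto_pi_nhds.mpr ?_
  intro i
  rw [tendsto_pi_nhds]
  intro j
  have hentry : ∀ k : ℕ, ((1 - P) ^ k) i j =
      ∑ l, U i l * (1 - d l) ^ k * (star U) l j := by
    intro k
    rw [key k, Matrix.mul_apply]
    refine Finset.sum_congr rfl fun l _ => ?_
    rw [Matrix.mul_diagonal]
  simp only [hentry, Matrix.zero_apply]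
  have : Filter.Tendsto (fun k : ℕ => ∑ l, U i l * (1 - d l) ^ k * (star U) l j)
      Filter.atTop (nhds (∑ l : ι, (0:ℝ))) := by
    apply tendsto_finset_sum
    intro l _
    have hp : Filter.Tendsto (fun k : ℕ => (1 - d l) ^ k) Filter.atTop (nhds 0) :=
      tendsto_pow_atTop_nhds_zero_of_abs_lt_one (h l)
    have := (hp.const_mul (U i l)).mul_const ((star U) l j)
    simpa using this
  simpa using this

theorem stmt8 {m p n₁ n₂ : ℕ} (A : Matrix (Fin m) (Fin n₁) ℝ) (B : Matrix (Fin p) (Fin n₂) ℝ)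
    (hA : A.rank = n₁) (hB : B.rank = n₂) :
    Filter.Tendsto
      (fun k : ℕ => (1 - ((frobSq B)⁻¹ • (Bᵀ * B)) ⊗ₖ ((frobSq A)⁻¹ • (Aᵀ * A))) ^ k)
      Filter.atTop (nhds (0 : Matrix (Fin n₂ × Fin n₁) (Fin n₂ × Fin n₁) ℝ)) := by
  rcases Nat.eq_zero_or_pos n₁ with hn₁ | hn₁
  · subst hn₁
    have : (fun k : ℕ => (1 - ((frobSq B)⁻¹ • (Bᵀ * B)) ⊗ₖ ((frobSq A)⁻¹ • (Aᵀ * A))) ^ k) =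
        fun _ => 0 := by
      funext k; ext ⟨i1, i2⟩ j; exact i2.elim0
    rw [this]; exact tendsto_const_nhds
  rcases Nat.eq_zero_or_pos n₂ with hn₂ | hn₂
  · subst hn₂
    have : (fun k : ℕ => (1 - ((frobSq B)⁻¹ • (Bᵀ * B)) ⊗ₖ ((frobSq A)⁻¹ • (Aᵀ * A))) ^ k) =
        fun _ => 0 := by
      funext k; ext ⟨i1, i2⟩ j; exact i1.elim0
    rw [this]; exact tendsto_const_nhds
  -- main case
  have hA0 : A ≠ 0 := by
    rintro rfl; rw [Matrix.rank_zero] at hA; omega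
  have hB0 : B ≠ 0 := by
    rintro rfl; rw [Matrix.rank_zero] at hB; omega
  have hfA : 0 < frobSq A := frobSq_pos hA0
  have hfB : 0 < frobSq B := frobSq_pos hB0
  set cA : ℝ := (frobSq A)⁻¹ with hcA
  set cB : ℝ := (frobSq B)⁻¹ with hcB
  have hcA0 : 0 < cA := inv_pos.mpr hfA
  have hcB0 : 0 < cB := inv_pos.mpr hfB
  set S : Matrix (Fin n₂) (Fin n₂) ℝ := cB • (Bᵀ * B) with hS
  set T : Matrix (Fin n₁) (Fin n₁) ℝ := cA • (Aᵀ * A) with hT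
  set P : Matrix (Fin n₂ × Fin n₁) (Fin n₂ × Fin n₁) ℝ := S ⊗ₖ T with hP
  set X : Matrix (Fin p × Fin m) (Fin n₂ × Fin n₁) ℝ :=
    (Real.sqrt cB • B) ⊗ₖ (Real.sqrt cA • A) with hX
  have hPX : P = Xᵀ * X := by
    rw [hX, ← Matrix.kroneckerMap_transpose, ← Matrix.mul_kronecker_mul]
    rw [Matrix.transpose_smul, Matrix.transpose_smul]
    rw [Matrix.smul_mul, Matrix.mul_smul, Matrix.smul_mul, Matrix.mul_smul, smul_smul, smul_smul]
    rw [Real.mul_self_sqrt hcB0.le, Real.mul_self_sqrt hcA0.le]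
  have hPsd : P.PosSemidef := by
    rw [hPX, ← Matrix.conjTranspose_eq_transpose_of_trivial]
    exact Matrix.posSemidef_conjTranspose_mul_self X
  have hPH : P.IsHermitian := hPsd.1
  -- P is invertible
  have hGB : IsUnit (Bᵀ * B) :=
    isUnit_of_rank_eq _ (by rw [Matrix.rank_transpose_mul_self, hB])
  have hGA : IsUnit (Aᵀ * A) :=
    isUnit_of_rank_eq _ (by rw [Matrix.rank_transpose_mul_self, hA])
  have hdetS : S.det ≠ 0 := by
    rw [hS, Matrix.det_smul]
    refine mul_ne_zero (pow_ne_zero _ (ne_of_gt hcB0)) ?_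
    exact ((Matrix.isUnit_iff_isUnit_det _).mp hGB).ne_zero
  have hdetT : T.det ≠ 0 := by
    rw [hT, Matrix.det_smul]
    refine mul_ne_zero (pow_ne_zero _ (ne_of_gt hcA0)) ?_
    exact ((Matrix.isUnit_iff_isUnit_det _).mp hGA).ne_zero
  have hPunit : IsUnit P := by
    rw [Matrix.isUnit_iff_isUnit_det, hP, Matrix.det_kronecker, isUnit_iff_ne_zero]
    exact mul_ne_zero (pow_ne_zero _ hdetS) (pow_ne_zero _ hdetT)
  have hrankP : P.rank = Fintype.card (Fin n₂ × Fin n₁) := Matrix.rank_of_isUnit P hPunit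
  -- eigenvalues of P
  set d : Fin n₂ × Fin n₁ → ℝ := hPH.eigenvalues with hd
  have hd0 : ∀ i, 0 ≤ d i := hPsd.eigenvalues_nonneg
  have hdne : ∀ i, d i ≠ 0 := by
    intro i hi
    have hcard := hPH.rank_eq_card_non_zero_eigs
    rw [hrankP] at hcard
    have hlt : Fintype.card {j // d j ≠ 0} < Fintype.card (Fin n₂ × Fin n₁) :=
      Fintype.card_subtype_lt (x := i) (by simp [hi])
    exact hlt.ne hcard.symm
  have hdpos : ∀ i, 0 < d i := fun i => lt_of_le_of_ne (hd0 i) (Ne.symm (hdne i))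
  -- trace of P equals 1
  have htraceS : S.trace = 1 := by
    rw [hS, Matrix.trace_smul, frobSq_eq_trace, smul_eq_mul, hcB]
    exact inv_mul_cancel₀ (ne_of_gt hfB)
  have htraceT : T.trace = 1 := by
    rw [hT, Matrix.trace_smul, frobSq_eq_trace, smul_eq_mul, hcA]
    exact inv_mul_cancel₀ (ne_of_gt hfA)
  have htraceP : P.trace = 1 := by
    rw [hP, Matrix.trace_kronecker, htraceS, htraceT, mul_one]
  have hsum : ∑ i, d i = 1 := by
    have hdiag : P = (hPH.eigenvectorUnitary : Matrix _ _ ℝ) * Matrix.diagonal d *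
        star (hPH.eigenvectorUnitary : Matrix _ _ ℝ) := by
      have := hPH.spectral_theorem
      simpa [RCLike.ofReal_real_eq_id] using this
    have hU2 : star (hPH.eigenvectorUnitary : Matrix (Fin n₂ × Fin n₁) (Fin n₂ × Fin n₁) ℝ) *
        (hPH.eigenvectorUnitary : Matrix (Fin n₂ × Fin n₁) (Fin n₂ × Fin n₁) ℝ) = 1 :=
      Matrix.mem_unitaryGroup_iff'.mp hPH.eigenvectorUnitary.2
    calc ∑ i, d i = (Matrix.diagonal d).trace := by rw [Matrix.trace_diagonal]
      _ = P.trace := by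
          conv_rhs => rw [hdiag]
          rw [Matrix.trace_mul_comm, ← Matrix.mul_assoc, hU2, Matrix.one_mul]
      _ = 1 := htraceP
  have hdle : ∀ i, d i ≤ 1 := by
    intro i
    rw [← hsum]
    exact Finset.single_le_sum (fun j _ => hd0 j) (Finset.mem_univ i)
  have habs : ∀ i, |1 - d i| < 1 := by
    intro i
    rw [abs_lt]
    constructor
    · have := hdle i; linarith
    · have := hdpos i; linarith
  exact tendsto_pow_hermitian P hPH habs
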